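/- arXiv:0903.0112 — 3 statements merged into one kernel-verified Lean document; each statement's English description precedes it below -/
import Mathlib

section
/- For every integer k ≥ 1, the group G_k with presentation ⟨x, y | x y x⁻¹ = y⁻¹, x² = y^k⟩ is isomorphic to the dicyclic group of order 4k (Mathlib's QuaternionGroup k). -/
/-- The relations of the generalised quaternion group `Q_{4k}`:
`x y x⁻¹ y` and `x² y^{-k}`, where `x = FreeGroup.of 0` and `y = FreeGroup.of 1`. -/
def quaternionRels (k : ℕ) : Set (FreeGroup (Fin 2)) :=
  {FreeGroup.of 0 * FreeGroup.of 1 * (FreeGroup.of 0)⁻¹ * FreeGroup.of 1,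
   FreeGroup.of 0 ^ 2 * FreeGroup.of 1 ^ (-(k : ℤ))}

namespace QuatAux

open QuaternionGroup

variable (k : ℕ)

abbrev P (k : ℕ) := PresentedGroup (quaternionRels k)

def X : P k := PresentedGroup.of 0

def Y : P k := PresentedGroup.of 1

lemma mk_rel {r : FreeGroup (Fin 2)} (hr : r ∈ quaternionRels k) :
    PresentedGroup.mk (quaternionRels k) r = 1 :=
  (QuotientGroup.eq_one_iff r).mpr (Subgroup.subset_normalClosure hr)

lemma rel1 : X k * Y k * (X k)⁻¹ * Y k = 1 := by
  have := mk_rel k (r := FreeGroup.of 0 * FreeGroup.of 1 * (FreeGroup.of 0)⁻¹ * FreeGroup.of 1)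
    (Or.inl rfl)
  simpa [X, Y, PresentedGroup.of, map_mul, map_inv] using this

lemma rel2 : X k ^ 2 = Y k ^ (k : ℤ) := by
  have := mk_rel k (r := FreeGroup.of 0 ^ 2 * FreeGroup.of 1 ^ (-(k : ℤ)))
    (Or.inr rfl)
  rw [map_mul, map_pow, map_zpow] at this
  have h := this
  rw [zpow_neg] at h
  exact (mul_inv_eq_one.mp h)

lemma conjY : X k * Y k * (X k)⁻¹ = (Y k)⁻¹ := by
  have := rel1 k
  rw [← mul_inv_eq_one (b := (Y k)⁻¹)]
  simpa using this

lemma conjY_zpow (m : ℤ) : X k * (Y k) ^ m * (X k)⁻¹ = (Y k) ^ (-m) := by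
  rw [← conj_zpow, conjY, inv_zpow, zpow_neg]

lemma Y_swap (m : ℤ) : (Y k) ^ m * X k = X k * (Y k) ^ (-m) := by
  have := conjY_zpow k (-m)
  rw [neg_neg] at this
  rw [← this]
  group

lemma Y_order : (Y k) ^ (2 * (k : ℤ)) = 1 := by
  have h1 : X k * (Y k) ^ (k : ℤ) * (X k)⁻¹ = (Y k) ^ (-(k : ℤ)) := conjY_zpow k k
  rw [← rel2 k] at h1
  have h2 : X k ^ 2 = (Y k) ^ (-(k : ℤ)) := by
    rw [← h1]; group
  have h3 : (Y k) ^ (k : ℤ) = (Y k) ^ (-(k : ℤ)) := by rw [← rel2 k, ← h2]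
  have : (Y k) ^ ((k : ℤ) + (k : ℤ)) = 1 := by
    rw [zpow_add]
    nth_rewrite 2 [h3]
    rw [zpow_neg, mul_inv_cancel]
  rw [two_mul]
  exact this

lemma keyY (m n : ℤ) (h : (m : ZMod (2 * k)) = (n : ZMod (2 * k))) :
    (Y k) ^ m = (Y k) ^ n := by
  have hmod : m ≡ n [ZMOD (2 * k)] := (ZMod.intCast_eq_intCast_iff _ _ _).mp h
  obtain ⟨t, ht⟩ := hmod.dvd
  have : m = n + (2 * (k : ℤ)) * (-t) := by linarith
  rw [this, zpow_add, zpow_mul, Y_order, one_zpow, mul_one]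

variable {k}

lemma cast_val (hk : k ≠ 0) (i : ZMod (2 * k)) :
    (((i.val : ℤ)) : ZMod (2 * k)) = i := by
  haveI : NeZero (2 * k) := ⟨by omega⟩
  push_cast
  simp [ZMod.natCast_val, ZMod.cast_id]

/-- The inverse map. -/
def psi : QuaternionGroup k → P k
  | .a i => (Y k) ^ (i.val : ℤ)
  | .xa i => X k * (Y k) ^ (i.val : ℤ)

lemma psi_mul (hk : k ≠ 0) (g h : QuaternionGroup k) :
    psi (g * h) = psi g * psi h := by
  haveI : NeZero (2 * k) := ⟨by omega⟩
  rcases g with i | i <;> rcases h with j | j <;>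
    simp only [psi, a_mul_a, a_mul_xa, xa_mul_a, xa_mul_xa]
  · rw [← zpow_add]
    exact keyY k _ _ (by rw [cast_val hk]; push_cast [cast_val hk]; ring)
  · rw [← mul_assoc, Y_swap, mul_assoc, ← zpow_add]
    congr 1
    exact keyY k _ _ (by rw [cast_val hk]; push_cast [cast_val hk]; ring)
  · rw [mul_assoc, ← zpow_add]
    congr 1
    exact keyY k _ _ (by rw [cast_val hk]; push_cast [cast_val hk]; ring)
  · symm
    calc X k * Y k ^ (i.val : ℤ) * (X k * Y k ^ (j.val : ℤ))
        = X k * (Y k ^ (i.val : ℤ) * X k) * Y k ^ (j.val : ℤ) := by group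
      _ = X k * (X k * Y k ^ (-(i.val : ℤ))) * Y k ^ (j.val : ℤ) := by rw [Y_swap]
      _ = X k ^ 2 * (Y k ^ (-(i.val : ℤ)) * Y k ^ (j.val : ℤ)) := by rw [sq]; group
      _ = Y k ^ (k : ℤ) * Y k ^ (-(i.val : ℤ) + (j.val : ℤ)) := by rw [rel2, zpow_add]
      _ = Y k ^ ((k : ℤ) + (-(i.val : ℤ) + (j.val : ℤ))) := by rw [← zpow_add]
      _ = Y k ^ ((((k : ZMod (2 * k)) + j - i).val : ℤ)) := by
          exact keyY k _ _ (by push_cast [cast_val hk]; ring)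

end QuatAux

theorem presented_quaternion_iso (k : ℕ) (hk : 1 ≤ k) :
    Nonempty (PresentedGroup (quaternionRels k) ≃* QuaternionGroup k) := by
  haveI : NeZero (2 * k) := ⟨by omega⟩
  haveI : Fact (1 < 2 * k) := ⟨by omega⟩
  have hk' : k ≠ 0 := by omega
  have h2k : ((2 * k : ℕ) : ZMod (2 * k)) = 0 := ZMod.natCast_self _
  set f : Fin 2 → QuaternionGroup k :=
    ![QuaternionGroup.xa 0, QuaternionGroup.a 1] with hf
  have hf0 : f 0 = QuaternionGroup.xa 0 := rfl
  have hf1 : f 1 = QuaternionGroup.a 1 := rfl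
  have hrels : ∀ r ∈ quaternionRels k, FreeGroup.lift f r = 1 := by
    rintro r (rfl | rfl)
    · simp only [map_mul, map_inv, FreeGroup.lift_apply_of, hf0, hf1]
      have h0 : (QuaternionGroup.xa 0 : QuaternionGroup k)⁻¹ =
          QuaternionGroup.xa ((k : ZMod (2 * k)) + 0) := rfl
      rw [h0]
      simp only [QuaternionGroup.xa_mul_a, QuaternionGroup.a_mul_xa,
        QuaternionGroup.xa_mul_xa, QuaternionGroup.a_mul_a]
      rw [QuaternionGroup.one_def]
      congr 1
      have : ((k : ZMod (2 * k)) + k) = 0 := by push_cast at h2k; linear_combination h2k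
      linear_combination this
    · simp only [map_mul, map_pow, map_zpow, FreeGroup.lift_apply_of, hf0, hf1]
      rw [QuaternionGroup.xa_sq, zpow_neg, zpow_natCast, QuaternionGroup.a_one_pow,
        mul_inv_cancel]
  let φ := PresentedGroup.toGroup hrels
  let ψ : QuaternionGroup k →* QuatAux.P k :=
    MonoidHom.mk' QuatAux.psi (fun a b => QuatAux.psi_mul hk' a b)
  have hφX : φ (QuatAux.X k) = QuaternionGroup.xa 0 := PresentedGroup.toGroup.of hrels
  have hφY : φ (QuatAux.Y k) = QuaternionGroup.a 1 := PresentedGroup.toGroup.of hrels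
  have hval : ∀ i : ZMod (2 * k), ((i.val : ZMod (2 * k))) = i := by
    intro i; simp [ZMod.natCast_val, ZMod.cast_id]
  have right : ∀ g : QuaternionGroup k, φ (ψ g) = g := by
    rintro (i | i)
    · show φ (QuatAux.Y k ^ (i.val : ℤ)) = _
      rw [map_zpow, hφY, zpow_natCast, QuaternionGroup.a_one_pow, hval]
    · show φ (QuatAux.X k * QuatAux.Y k ^ (i.val : ℤ)) = _
      rw [map_mul, map_zpow, hφX, hφY, zpow_natCast, QuaternionGroup.a_one_pow,
        QuaternionGroup.xa_mul_a, hval, zero_add]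
  have left : ψ.comp φ = MonoidHom.id _ := by
    apply PresentedGroup.ext
    intro x
    fin_cases x
    · show ψ (φ (QuatAux.X k)) = QuatAux.X k
      rw [hφX]
      show QuatAux.X k * QuatAux.Y k ^ (((0 : ZMod (2 * k)).val : ℤ)) = QuatAux.X k
      simp [ZMod.val_zero]
    · show ψ (φ (QuatAux.Y k)) = QuatAux.Y k
      rw [hφY]
      show QuatAux.Y k ^ (((1 : ZMod (2 * k)).val : ℤ)) = QuatAux.Y k
      rw [ZMod.val_one]
      simp
  exact ⟨{ toFun := φ, invFun := ψ,
           left_inv := fun p => DFunLike.congr_fun left p,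
           right_inv := right,
           map_mul' := map_mul φ }⟩
end

section
/- For every integer k ≥ 1, the image of the generator x in the group G_k with presentation ⟨x, y | x y x⁻¹ = y⁻¹, x² = y^k⟩ has order exactly 4. -/
theorem presented_quaternion_orderOf_x (k : ℕ) (hk : 1 ≤ k) :
    orderOf (PresentedGroup.of (rels := quaternionRels k) 0) = 4 := by
  haveI : NeZero k := ⟨by omega⟩
  set X : PresentedGroup (quaternionRels k) := PresentedGroup.of 0 with hX
  set Y : PresentedGroup (quaternionRels k) := PresentedGroup.of 1 with hY
  -- relations hold in the presented group
  have hrel : ∀ r ∈ quaternionRels k, PresentedGroup.mk (quaternionRels k) r = 1 := by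
    intro r hr
    exact (QuotientGroup.eq_one_iff r).mpr (Subgroup.subset_normalClosure hr)
  have h1 : X * Y * X⁻¹ * Y = 1 := by
    have := hrel _ (Set.mem_insert _ _)
    simpa [hX, hY, PresentedGroup.of] using this
  have h2 : X ^ 2 * Y ^ (-(k : ℤ)) = 1 := by
    have := hrel _ (Set.mem_insert_of_mem _ rfl)
    simpa [hX, hY, PresentedGroup.of] using this
  have h1' : X * Y * X⁻¹ = Y⁻¹ := eq_inv_of_mul_eq_one_left (by rw [← h1])
  have h2' : X ^ 2 = Y ^ k := by
    have : X ^ 2 = (Y ^ (-(k : ℤ)))⁻¹ := eq_inv_of_mul_eq_one_left (by rw [← h2])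
    rw [this, zpow_neg, inv_inv, zpow_natCast]
  have hconj : X * Y ^ k * X⁻¹ = (Y ^ k)⁻¹ := by
    rw [← conj_pow, h1', inv_pow]
  have hx4 : X ^ 4 = 1 := by
    have : X * X ^ 2 * X⁻¹ = (X ^ 2)⁻¹ := by
      rw [h2', hconj]
    have h : X ^ 2 = (X ^ 2)⁻¹ := by
      rw [← this]; group
    calc X ^ 4 = X ^ 2 * X ^ 2 := by group
    _ = (X ^ 2)⁻¹ * X ^ 2 := by rw [← h]
    _ = 1 := inv_mul_cancel _
  -- homomorphism to the concrete quaternion group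
  have hf : ∀ r ∈ quaternionRels k,
      FreeGroup.lift (![QuaternionGroup.xa 0, QuaternionGroup.a 1] :
        Fin 2 → QuaternionGroup k) r = 1 := by
    intro r hr
    have hinv : (QuaternionGroup.xa 0 : QuaternionGroup k)⁻¹ =
        QuaternionGroup.xa ((k : ZMod (2 * k)) + 0) := rfl
    rcases hr with h | h <;> subst h
    · simp only [FreeGroup.lift_apply_of, map_mul, map_inv, Matrix.cons_val_zero, Matrix.cons_val_one,
        Matrix.head_cons]
      rw [hinv]
      simp only [QuaternionGroup.xa_mul_a, QuaternionGroup.xa_mul_xa, QuaternionGroup.a_mul_a,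
        QuaternionGroup.one_def]
      congr 1
      have h2k : ((2 * k : ℕ) : ZMod (2 * k)) = 0 := ZMod.natCast_self _
      push_cast at h2k
      linear_combination h2k
    · simp only [FreeGroup.lift_apply_of, map_mul, map_pow, map_zpow, Matrix.cons_val_zero, Matrix.cons_val_one,
        Matrix.head_cons]
      rw [zpow_neg, zpow_natCast, QuaternionGroup.a_one_pow, QuaternionGroup.xa_sq,
        mul_inv_cancel]
  let φ := PresentedGroup.toGroup hf
  have hφX : φ X = QuaternionGroup.xa 0 := by
    simp [hX, φ, PresentedGroup.toGroup.of]
  have hdvd1 : orderOf X ∣ 4 := orderOf_dvd_of_pow_eq_one hx4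
  have hdvd2 : (4 : ℕ) ∣ orderOf X := by
    have := orderOf_map_dvd φ X
    rw [hφX, QuaternionGroup.orderOf_xa] at this
    exact this
  exact Nat.dvd_antisymm hdvd1 hdvd2
end

section
/- For every integer k ≥ 1, the image of the generator y in the group G_k with presentation ⟨x, y | x y x⁻¹ = y⁻¹, x² = y^k⟩ has order exactly 2k. -/
open QuaternionGroup in
/-- The map from generators to `QuaternionGroup k` realising the presentation. -/
def quatF (k : ℕ) : Fin 2 → QuaternionGroup k := ![xa 0, a 1]

open QuaternionGroup in
lemma quatF_rels (k : ℕ) : ∀ r ∈ quaternionRels k, FreeGroup.lift (quatF k) r = 1 := by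
  intro r hr
  rcases hr with h | h
  · subst h
    simp only [map_mul, map_inv, FreeGroup.lift_apply_of, quatF]
    show xa 0 * a 1 * (xa 0)⁻¹ * a 1 = 1
    have hinv : (xa 0 : QuaternionGroup k)⁻¹ = xa (-(k : ZMod (2 * k))) := by
      symm
      apply eq_inv_of_mul_eq_one_left
      rw [xa_mul_xa, one_def]
      congr 1
      have h0 : ((2 * k : ℕ) : ZMod (2 * k)) = 0 := ZMod.natCast_self _
      push_cast at h0
      linear_combination h0
    rw [hinv, xa_mul_a, xa_mul_xa, a_mul_a, one_def]
    congr 1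
    ring
  · simp only [Set.mem_singleton_iff] at h
    subst h
    simp only [map_mul, map_zpow, map_pow, FreeGroup.lift_apply_of, quatF]
    show (xa 0 : QuaternionGroup k) ^ 2 * (a 1) ^ (-(k : ℤ)) = 1
    rw [zpow_neg, zpow_natCast, a_one_pow, xa_sq, mul_inv_eq_one]

theorem presented_quaternion_orderOf_y (k : ℕ) (hk : 1 ≤ k) :
    orderOf (PresentedGroup.of (rels := quaternionRels k) 1) = 2 * k := by
  set X : PresentedGroup (quaternionRels k) := PresentedGroup.of 0 with hX
  set Y : PresentedGroup (quaternionRels k) := PresentedGroup.of 1 with hY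
  have hrel : ∀ r ∈ quaternionRels k, PresentedGroup.mk (quaternionRels k) r = 1 := by
    intro r hr
    exact (QuotientGroup.eq_one_iff r).mpr (Subgroup.subset_normalClosure hr)
  have h1 : X * Y * X⁻¹ * Y = 1 := by
    have := hrel _ (Or.inl rfl)
    simpa [hX, hY, PresentedGroup.of] using this
  have h2 : X ^ 2 = Y ^ (k : ℤ) := by
    have := hrel _ (Or.inr rfl)
    simp only [map_mul, map_pow, map_zpow] at this
    rw [mul_eq_one_iff_eq_inv, ← zpow_neg, neg_neg] at this
    simpa [hX, hY, PresentedGroup.of] using this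
  have hconj : X * Y * X⁻¹ = Y⁻¹ := by
    rw [← mul_eq_one_iff_eq_inv]; exact h1
  have hconjk : X * Y ^ (k : ℤ) * X⁻¹ = Y ^ (-(k : ℤ)) := by
    rw [zpow_neg, ← conj_zpow, hconj, inv_zpow]
  have hy2k : Y ^ (2 * k) = 1 := by
    have : X * X ^ 2 * X⁻¹ = X ^ 2 := by group
    rw [h2, hconjk] at this
    have : Y ^ (2 * k : ℤ) = 1 := by
      rw [two_mul, zpow_add]
      nth_rewrite 1 [← this]
      rw [← zpow_add]
      simp
    have h := this
    rw [show ((2 * k : ℤ)) = ((2 * k : ℕ) : ℤ) by push_cast; ring, zpow_natCast] at h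
    exact h
  haveI : NeZero k := ⟨by omega⟩
  have hdvd1 : orderOf Y ∣ 2 * k := orderOf_dvd_of_pow_eq_one hy2k
  have hdvd2 : 2 * k ∣ orderOf Y := by
    have := orderOf_map_dvd (PresentedGroup.toGroup (quatF_rels k)) Y
    rw [hY, PresentedGroup.toGroup.of] at this
    have ha : orderOf (quatF k 1) = 2 * k := by
      show orderOf (QuaternionGroup.a 1 : QuaternionGroup k) = 2 * k
      exact QuaternionGroup.orderOf_a_one
    rwa [ha] at this
  exact Nat.dvd_antisymm hdvd1 hdvd2
end
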